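/- (Lemma 5.1, first inequality.) Let R : E' → E'_i have homogeneous type s with degree n = Σ_j s_j, and suppose ‖R(w)‖ ≤ C for all w ∈ E' with ‖w‖ ≤ 1. Then for every v ∈ E with ‖v‖ ≤ 1, ‖F_i^{-1}(R(F(v)))‖ ≤ e^{−χ_i + Σ_j s_j χ_j + (n+1)ε} · C. -/

import Mathlib

/-- A map `R` from a product of real vector spaces to a real vector space has
homogeneous type `s = (s 0, …, s (ℓ-1))` if scaling the `j`-th component by `a j`
multiplies the value by `∏ j, (a j) ^ (s j)`. -/
def HomogType {ℓ : ℕ} {E : Fin ℓ → Type*} [∀ j, AddCommGroup (E j)] [∀ j, Module ℝ (E j)]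
    {V : Type*} [AddCommGroup V] [Module ℝ V]
    (s : Fin ℓ → ℕ) (R : (∀ j, E j) → V) : Prop :=
  ∀ (a : Fin ℓ → ℝ) (w : ∀ j, E j), R (fun j => a j • w j) = (∏ j, a j ^ s j) • R w

lemma piLp_norm_le_norm {ℓ : ℕ} {E E' : Fin ℓ → Type*}
    [∀ j, NormedAddCommGroup (E j)] [∀ j, NormedAddCommGroup (E' j)]
    (u : PiLp 2 E') (v : PiLp 2 E) (h : ∀ j, ‖u j‖ ≤ ‖v j‖) : ‖u‖ ≤ ‖v‖ := by
  have h2 : (0:ℝ) < ENNReal.toReal 2 := by norm_num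
  rw [PiLp.norm_eq_sum h2, PiLp.norm_eq_sum h2]
  apply Real.rpow_le_rpow (Finset.sum_nonneg fun j _ => Real.rpow_nonneg (norm_nonneg _) _)
    (Finset.sum_le_sum fun j _ => Real.rpow_le_rpow (norm_nonneg _) (h j) (by positivity))
    (by positivity)

/-- Lemma 5.1, first inequality: for `R : E' → E'ᵢ` of homogeneous type `s` bounded by `C`
on the unit ball, `‖Fᵢ⁻¹ (R (F v))‖ ≤ e^{-χ i + ∑ s j • χ j + (n+1) ε} C` on the unit ball,
where `n = ∑ j, s j`. -/
theorem norm_conj_le_of_homogType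
    {ℓ : ℕ} (χ : Fin (ℓ + 1) → ℝ) (hmono : StrictMono χ) (hneg : ∀ j, χ j < 0)
    (E E' : Fin (ℓ + 1) → Type*)
    [∀ j, NormedAddCommGroup (E j)] [∀ j, NormedSpace ℝ (E j)]
    [∀ j, NormedAddCommGroup (E' j)] [∀ j, NormedSpace ℝ (E' j)]
    (ε : ℝ) (hε : 0 < ε)
    (F : ∀ j, E j ≃ₗ[ℝ] E' j)
    (hF : ∀ j, ∀ u : E j,
      Real.exp (χ j - ε) * ‖u‖ ≤ ‖F j u‖ ∧ ‖F j u‖ ≤ Real.exp (χ j + ε) * ‖u‖)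
    (i : Fin (ℓ + 1)) (s : Fin (ℓ + 1) → ℕ)
    (R : PiLp 2 E' → E' i) (hR : HomogType s (fun w => R (WithLp.toLp 2 w)))
    (C : ℝ) (hC : ∀ w : PiLp 2 E', ‖w‖ ≤ 1 → ‖R w‖ ≤ C) :
    ∀ v : PiLp 2 E, ‖v‖ ≤ 1 →
      ‖(F i).symm (R (WithLp.toLp 2 (fun j => F j (v j))))‖ ≤
        Real.exp (-χ i + (∑ j, (s j : ℝ) * χ j) + (((∑ j, s j : ℕ) : ℝ) + 1) * ε) * C := by
  intro v hv
  set a : Fin (ℓ + 1) → ℝ := fun j => Real.exp (χ j + ε) with ha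
  set u : PiLp 2 E' := WithLp.toLp 2 (fun j => (a j)⁻¹ • F j (v j)) with hu
  have hscale : (fun j => F j (v j)) = fun j => a j • u j := by
    funext j
    rw [hu]
    simp [ha, smul_smul, mul_inv_cancel₀ (Real.exp_ne_zero _)]
  have hunorm : ‖u‖ ≤ 1 := by
    refine le_trans (piLp_norm_le_norm u v fun j => ?_) hv
    have := (hF j (v j)).2
    rw [hu]
    simp only [PiLp.toLp_apply, ha, norm_smul, norm_inv, Real.norm_eq_abs, abs_of_pos (Real.exp_pos _)]
    rw [inv_mul_le_iff₀ (Real.exp_pos _)]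
    simpa [mul_comm] using this
  have hRw : ‖R (WithLp.toLp 2 (fun j => F j (v j)))‖ ≤ (∏ j, a j ^ s j) * C := by
    rw [hscale, show R (WithLp.toLp 2 (fun j => a j • u j)) = (∏ j, a j ^ s j) • R (WithLp.toLp 2 u.ofLp) from hR a u.ofLp,
      WithLp.toLp_ofLp, norm_smul, Real.norm_eq_abs, abs_of_nonneg
      (Finset.prod_nonneg fun j _ => pow_nonneg (Real.exp_pos _).le _)]
    exact mul_le_mul_of_nonneg_left (hC u hunorm)
      (Finset.prod_nonneg fun j _ => pow_nonneg (Real.exp_pos _).le _)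
  have hsymm : ∀ x : E' i, ‖(F i).symm x‖ ≤ Real.exp (-(χ i - ε)) * ‖x‖ := by
    intro x
    have := (hF i ((F i).symm x)).1
    rw [(F i).apply_symm_apply] at this
    rw [Real.exp_neg, inv_mul_eq_div, le_div_iff₀ (Real.exp_pos _), mul_comm]
    exact this
  have hprod : (∏ j, a j ^ s j) = Real.exp (∑ j, (s j : ℝ) * (χ j + ε)) := by
    rw [Real.exp_sum]
    exact Finset.prod_congr rfl fun j _ => by
      rw [ha, ← Real.exp_nat_mul]
  calc ‖(F i).symm (R (WithLp.toLp 2 (fun j => F j (v j))))‖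
      ≤ Real.exp (-(χ i - ε)) * ‖R (WithLp.toLp 2 (fun j => F j (v j)))‖ := hsymm _
    _ ≤ Real.exp (-(χ i - ε)) * ((∏ j, a j ^ s j) * C) :=
        mul_le_mul_of_nonneg_left hRw (Real.exp_pos _).le
    _ = Real.exp (-χ i + (∑ j, (s j : ℝ) * χ j) + (((∑ j, s j : ℕ) : ℝ) + 1) * ε) * C := by
        rw [hprod, ← mul_assoc, ← Real.exp_add]
        congr 2
        simp only [mul_add, Finset.sum_add_distrib, ← Finset.sum_mul]
        push_cast
        ring
  done
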